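/- Let f be a C¹ function on [a,∞) with f' eventually of one sign and |f'| regularly varying of index ϑ < -1. If f(t) → 0 as t → ∞, then f is normalized regularly varying of index ϑ + 1, i.e., t f'(t)/f(t) → ϑ + 1 as t → ∞. -/

import Mathlib

open Filter Real
open Set MeasureTheory

/-- `f` is regularly varying (at infinity) of index `θ`. -/
def RegVary (f : ℝ → ℝ) (θ : ℝ) : Prop :=
  ∀ l : ℝ, 0 < l → Filter.Tendsto (fun t => f (l * t) / f t) Filter.atTop (nhds (l ^ θ))

lemma uct_additive (k : ℝ → ℝ) (hk : Continuous k) (θ : ℝ)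
    (hconv : ∀ v : ℝ, 0 ≤ v → Tendsto (fun x => k (x + v) - k x) atTop (nhds (θ * v)))
    (U : ℝ) (hU : 0 ≤ U) (ε : ℝ) (hε : 0 < ε) :
    ∃ X : ℝ, ∀ x ≥ X, ∀ u ∈ Set.Icc (0:ℝ) U, |k (x + u) - k x - θ * u| ≤ ε := by
  by_contra hcon
  push_neg at hcon
  choose x hx u hu hbad using fun n : ℕ => hcon n
  have hxtop : Tendsto x atTop atTop :=
    tendsto_atTop_mono hx tendsto_natCast_atTop_atTop
  have hxutop : Tendsto (fun n => x n + u n) atTop atTop :=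
    tendsto_atTop_mono (fun n => le_add_of_nonneg_right (hu n).1) hxtop
  set D : ℕ → ℝ → ℝ := fun n v => k (x n + v) - k (x n) - θ * v with hD
  set E : ℕ → ℝ → ℝ := fun n v => k (x n + u n + v) - k (x n + u n) - θ * v with hE
  set I : Set ℝ := Set.Icc 0 (U + 1) with hI
  set S : ℕ → Set ℝ := fun m => I ∩ ⋂ (n : ℕ) (_ : m ≤ n),
      ({v | |D n v| ≤ ε / 3} ∩ {v | |E n v| ≤ ε / 3}) with hSdef
  have hDcont : ∀ n, Continuous fun v => |D n v| := fun n =>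
    (((hk.comp (continuous_const.add continuous_id)).sub continuous_const).sub
      (continuous_const.mul continuous_id)).abs
  have hEcont : ∀ n, Continuous fun v => |E n v| := fun n =>
    (((hk.comp (continuous_const.add continuous_id)).sub continuous_const).sub
      (continuous_const.mul continuous_id)).abs
  have hSclosed : ∀ m, IsClosed (S m) := by
    intro m
    refine isClosed_Icc.inter (isClosed_iInter fun n => isClosed_iInter fun _ => ?_)
    exact (isClosed_le (hDcont n) continuous_const).inter
      (isClosed_le (hEcont n) continuous_const)
  have hSmeas : ∀ m, MeasurableSet (S m) := fun m => (hSclosed m).measurableSet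
  have hSmono : Monotone S := by
    intro m m' hmm'
    refine inter_subset_inter_right _ ?_
    intro v hv
    simp only [mem_iInter] at hv ⊢
    exact fun n hn => hv n (le_trans hmm' hn)
  have hcover : ∀ v ∈ I, ∃ m, v ∈ S m := by
    intro v hv
    have h0 : Tendsto (fun n => D n v) atTop (nhds 0) := by
      have := ((hconv v hv.1).comp hxtop).sub_const (θ * v)
      simpa using this
    have h0' : Tendsto (fun n => E n v) atTop (nhds 0) := by
      have := ((hconv v hv.1).comp hxutop).sub_const (θ * v)
      simpa using this
    have h1 : ∀ᶠ n in atTop, |D n v| ≤ ε / 3 := by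
      have := h0.abs
      rw [abs_zero] at this
      exact this.eventually (eventually_le_nhds (by linarith))
    have h2 : ∀ᶠ n in atTop, |E n v| ≤ ε / 3 := by
      have := h0'.abs
      rw [abs_zero] at this
      exact this.eventually (eventually_le_nhds (by linarith))
    obtain ⟨m, hm⟩ := (h1.and h2).exists_forall_of_atTop
    refine ⟨m, hv, ?_⟩
    simp only [mem_iInter]
    exact fun n hn => ⟨(hm n hn).1, (hm n hn).2⟩
  have hUnion : (⋃ m, S m) = I := by
    apply Subset.antisymm
    · exact iUnion_subset fun m => inter_subset_left
    · intro v hv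
      obtain ⟨m, hm⟩ := hcover v hv
      exact mem_iUnion.2 ⟨m, hm⟩
  have hVI : volume I = ENNReal.ofReal (U + 1) := by
    rw [hI, Real.volume_Icc, sub_zero]
  have hkey : Tendsto (fun m => volume (S m)) atTop (nhds (volume I)) := by
    rw [← hUnion]
    exact tendsto_measure_iUnion_atTop hSmono
  have hlt : ENNReal.ofReal (U + 3 / 4) < volume I := by
    rw [hVI]
    exact ENNReal.ofReal_lt_ofReal_iff_of_nonneg (by linarith) |>.mpr (by linarith)
  obtain ⟨m, hm⟩ := (hkey.eventually (eventually_gt_nhds hlt)).exists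
  -- Y = shift of S m
  set Y : Set ℝ := (fun v => v - u m) ⁻¹' (S m) with hYdef
  have hYmeas : MeasurableSet Y := (hSmeas m).preimage (measurable_id.sub_const _)
  have hYvol : volume Y = volume (S m) := by
    rw [hYdef]
    simp only [sub_eq_add_neg]
    exact measure_preimage_add_right volume (-u m) (S m)
  have hYdiff : Y \ I ⊆ Set.Ioc (U + 1) (U + 1 + u m) := by
    intro v hv
    obtain ⟨hvY, hvI⟩ := hv
    have h1 : v - u m ∈ I := (hSmono le_rfl hvY : v - u m ∈ S m).1
    have h2 : 0 ≤ v - u m := h1.1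
    have h3 : v - u m ≤ U + 1 := h1.2
    have h4 : 0 ≤ v := le_trans (hu m).1 (by linarith)
    have h5 : ¬(v ≤ U + 1) := fun h => hvI ⟨h4, h⟩
    constructor <;> linarith
  have hYdvol : volume (Y \ I) ≤ ENNReal.ofReal U := by
    refine le_trans (measure_mono hYdiff) ?_
    rw [Real.volume_Ioc]
    apply ENNReal.ofReal_le_ofReal
    have := (hu m).2
    linarith
  have hYI : ENNReal.ofReal (3 / 4) < volume (Y ∩ I) := by
    by_contra h
    push_neg at h
    have h1 : volume Y ≤ volume (Y ∩ I) + volume (Y \ I) := measure_le_inter_add_diff _ _ _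
    have h2 : volume (S m) ≤ ENNReal.ofReal (3 / 4) + ENNReal.ofReal U := by
      rw [← hYvol]
      exact le_trans h1 (add_le_add h hYdvol)
    rw [← ENNReal.ofReal_add (by norm_num) (by linarith [hU])] at h2
    have h3 : ENNReal.ofReal (U + 3 / 4) ≤ ENNReal.ofReal (3 / 4 + U) :=
      ENNReal.ofReal_le_ofReal (by linarith)
    exact absurd (lt_of_lt_of_le hm (le_trans h2 (le_of_eq (by rw [add_comm U (3/4)])))) (lt_irrefl _)
  have hnonempty : (S m ∩ (Y ∩ I)).Nonempty := by
    apply nonempty_of_measure_ne_zero (μ := volume)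
    intro hzero
    have h1 : volume (S m ∪ Y ∩ I) + volume (S m ∩ (Y ∩ I)) = volume (S m) + volume (Y ∩ I) :=
      measure_union_add_inter _ (hYmeas.inter (isClosed_Icc.measurableSet))
    rw [hzero, add_zero] at h1
    have h2 : volume (S m ∪ Y ∩ I) ≤ volume I :=
      measure_mono (union_subset (fun v hv => hv.1) inter_subset_right)
    have h3 : ENNReal.ofReal (U + 3 / 4) + ENNReal.ofReal (3 / 4) < volume (S m) + volume (Y ∩ I) :=
      ENNReal.add_lt_add hm hYI
    rw [← h1] at h3
    have h5 : ENNReal.ofReal (U + 1) ≤ ENNReal.ofReal (U + 3 / 4) + ENNReal.ofReal (3 / 4) := by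
      rw [← ENNReal.ofReal_add (by linarith) (by norm_num)]
      exact ENNReal.ofReal_le_ofReal (by linarith)
    have h6 : volume (S m ∪ Y ∩ I) ≤ ENNReal.ofReal (U + 1) := hVI ▸ h2
    exact absurd (lt_of_le_of_lt h5 h3) (not_lt.2 h6)
  -- extract the point and derive the contradiction
  obtain ⟨v, hvS, hvY, hvI⟩ := hnonempty
  have hvS' : v ∈ ⋂ (n : ℕ) (_ : m ≤ n), ({v | |D n v| ≤ ε / 3} ∩ {v | |E n v| ≤ ε / 3}) := hvS.2
  simp only [mem_iInter] at hvS'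
  have hvD : |D m v| ≤ ε / 3 := (hvS' m le_rfl).1
  have hwS : v - u m ∈ S m := hvY
  have hwS' := hwS.2
  simp only [mem_iInter] at hwS'
  have hwE : |E m (v - u m)| ≤ ε / 3 := (hwS' m le_rfl).2
  have harg : x m + u m + (v - u m) = x m + v := by ring
  have hiden : k (x m + u m) - k (x m) - θ * u m = D m v - E m (v - u m) := by
    simp only [hD, hE, harg]
    ring
  have : |k (x m + u m) - k (x m) - θ * u m| ≤ ε / 3 + ε / 3 := by
    rw [hiden]
    exact le_trans (abs_sub _ _) (add_le_add hvD hwE)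
  have := hbad m
  linarith

lemma potter_additive (k : ℝ → ℝ) (θ : ℝ)
    (huct : ∀ U : ℝ, 0 ≤ U → ∀ ε : ℝ, 0 < ε → ∃ X : ℝ, ∀ x ≥ X, ∀ u ∈ Set.Icc (0:ℝ) U,
      |k (x + u) - k x - θ * u| ≤ ε)
    (ε : ℝ) (hε : 0 < ε) :
    ∃ X : ℝ, ∀ x ≥ X, ∀ y : ℝ, 0 ≤ y → k (x + y) - k x ≤ (θ + ε) * y + ε := by
  obtain ⟨X, hX⟩ := huct 1 zero_le_one ε hε
  refine ⟨X, ?_⟩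
  have key : ∀ n : ℕ, ∀ x ≥ X, ∀ y : ℝ, 0 ≤ y → y ≤ n + 1 →
      k (x + y) - k x ≤ θ * y + (n + 1) * ε := by
    intro n
    induction n with
    | zero =>
      intro x hx y h0 h1
      have h2 := hX x hx y ⟨h0, by simpa using h1⟩
      have := abs_le.1 h2
      push_cast
      linarith [this.2]
    | succ n ih =>
      intro x hx y h0 h1
      by_cases hy : y ≤ n + 1
      · have := ih x hx y h0 hy
        have hn : ((n:ℝ) + 1) * ε ≤ ((n:ℕ) + 1 + 1) * ε := by nlinarith
        push_cast at this ⊢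
        linarith
      · push_neg at hy
        have h2 := hX x hx 1 ⟨zero_le_one, le_refl 1⟩
        have h2' := (abs_le.1 h2).2
        have h3 : k ((x + 1) + (y - 1)) - k (x + 1) ≤ θ * (y - 1) + (n + 1) * ε := by
          refine ih (x + 1) (by linarith) (y - 1) (by linarith) ?_
          push_cast at h1 ⊢
          linarith
        have harg : x + 1 + (y - 1) = x + y := by ring
        rw [harg] at h3
        push_cast
        push_cast at h3
        linarith
  intro x hx y hy
  have h1 : y < (⌊y⌋₊ : ℝ) + 1 := Nat.lt_floor_add_one y
  have h2 : (⌊y⌋₊ : ℝ) ≤ y := Nat.floor_le hy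
  have h3 := key ⌊y⌋₊ x hx y hy h1.le
  nlinarith

set_option maxHeartbeats 1600000 in
theorem nrv_of_deriv_rv_lt_neg_one (f : ℝ → ℝ) (θ : ℝ) (hθ : θ < -1)
    (hf : ContDiff ℝ 1 f)
    (hsign : (∀ᶠ t in atTop, 0 < deriv f t) ∨ (∀ᶠ t in atTop, deriv f t < 0))
    (hrv : RegVary (fun t => |deriv f t|) θ)
    (hzero : Tendsto f atTop (nhds 0)) :
    Tendsto (fun t => t * deriv f t / f t) atTop (nhds (θ + 1)) := by
  have hdc : Continuous (deriv f) := hf.continuous_deriv le_rfl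
  have hdiff : ∀ x : ℝ, DifferentiableAt ℝ f x := fun x =>
    (hf.differentiable one_ne_zero).differentiableAt
  set g : ℝ → ℝ := fun t => |deriv f t| with hgdef
  have hrv' : RegVary g θ := hrv
  have hgc : Continuous g := hdc.abs
  have hgnn : ∀ s, 0 ≤ g s := fun s => abs_nonneg _
  have hgev : ∀ᶠ t in atTop, 0 < g t := by
    rcases hsign with h | h
    · exact h.mono fun t ht => abs_pos.2 (ne_of_gt ht)
    · exact h.mono fun t ht => abs_pos.2 (ne_of_lt ht)
  obtain ⟨T₀', hT₀'⟩ := eventually_atTop.1 hgev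
  set T₀ : ℝ := max T₀' 1 with hT₀def
  have hT₀1 : (1:ℝ) ≤ T₀ := le_max_right _ _
  have hT₀pos : (0:ℝ) < T₀ := lt_of_lt_of_le one_pos hT₀1
  have hgT₀ : ∀ t, T₀ ≤ t → 0 < g t := fun t ht =>
    hT₀' t (le_trans (le_max_left _ _) ht)
  -- the auxiliary everywhere-positive modification and its log
  set G : ℝ → ℝ := fun s => g (max s T₀) with hGdef
  have hGc : Continuous G := hgc.comp (continuous_id.max continuous_const)
  have hGpos : ∀ s, 0 < G s := fun s => hgT₀ _ (le_max_right _ _)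
  have hGg : ∀ s, T₀ ≤ s → G s = g s := by
    intro s hs
    simp only [hGdef, max_eq_left hs]
  set k : ℝ → ℝ := fun x => Real.log (G (Real.exp x)) with hkdef
  have hkc : Continuous k := by
    apply Real.continuousOn_log.comp_continuous (hGc.comp Real.continuous_exp)
    intro x
    exact ne_of_gt (hGpos _)
  -- pointwise additive regular variation of k
  have hkconv : ∀ v : ℝ, 0 ≤ v → Tendsto (fun x => k (x + v) - k x) atTop (nhds (θ * v)) := by
    intro v hv
    have hl : (0:ℝ) < Real.exp v := Real.exp_pos v
    have h2 : Tendsto (fun x => g (Real.exp v * Real.exp x) / g (Real.exp x)) atTop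
        (nhds (Real.exp v ^ θ)) := (hrv' (Real.exp v) hl).comp Real.tendsto_exp_atTop
    have h3 : Tendsto (fun x => Real.log (g (Real.exp v * Real.exp x) / g (Real.exp x))) atTop
        (nhds (Real.log (Real.exp v ^ θ))) :=
      ((Real.continuousAt_log (ne_of_gt (Real.rpow_pos_of_pos hl θ))).tendsto).comp h2
    have h4 : Real.log (Real.exp v ^ θ) = θ * v := by
      rw [Real.log_rpow hl, Real.log_exp]
    rw [h4] at h3
    apply h3.congr'
    filter_upwards [eventually_ge_atTop (Real.log T₀)] with x hx
    have hex : T₀ ≤ Real.exp x := by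
      calc T₀ = Real.exp (Real.log T₀) := (Real.exp_log hT₀pos).symm
        _ ≤ Real.exp x := Real.exp_le_exp.2 hx
    have hexv : T₀ ≤ Real.exp (x + v) := le_trans hex (Real.exp_le_exp.2 (by linarith))
    have he : Real.exp (x + v) = Real.exp v * Real.exp x := by
      rw [Real.exp_add]; ring
    have hgx : 0 < g (Real.exp x) := hgT₀ _ hex
    have hgxv : 0 < g (Real.exp v * Real.exp x) := by
      rw [← he]; exact hgT₀ _ hexv
    have hkx : k x = Real.log (g (Real.exp x)) := by
      simp only [hkdef]; rw [hGg _ hex]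
    have hkxv : k (x + v) = Real.log (g (Real.exp v * Real.exp x)) := by
      simp only [hkdef]; rw [hGg _ hexv, he]
    rw [Real.log_div (ne_of_gt hgxv) (ne_of_gt hgx), hkx, hkxv]
  have huct := uct_additive k hkc θ hkconv
  -- multiplicative uniform convergence on compacts
  have hmul : ∀ Λ : ℝ, 1 ≤ Λ → ∀ ε : ℝ, 0 < ε → ∃ T : ℝ, T₀ ≤ T ∧ ∀ t, T ≤ t → ∀ s : ℝ,
      t ≤ s → s ≤ Λ * t → |g s - (s / t) ^ θ * g t| ≤ ε * ((s / t) ^ θ * g t) := by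
    intro Λ hΛ ε hε
    have hε₂ : 0 < Real.log (1 + ε) := Real.log_pos (by linarith)
    obtain ⟨X, hX⟩ := huct (Real.log Λ) (Real.log_nonneg hΛ) (Real.log (1 + ε)) hε₂
    refine ⟨max T₀ (Real.exp X), le_max_left _ _, ?_⟩
    intro t ht s hts hsΛ
    have htT₀ : T₀ ≤ t := le_trans (le_max_left _ _) ht
    have htpos : 0 < t := lt_of_lt_of_le hT₀pos htT₀
    have hspos : 0 < s := lt_of_lt_of_le htpos hts
    have hgt : 0 < g t := hgT₀ t htT₀
    have hgs : 0 < g s := hgT₀ s (le_trans htT₀ hts)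
    have hdivpos : 0 < s / t := div_pos hspos htpos
    have hx : X ≤ Real.log t := by
      rw [← Real.log_exp X]
      exact Real.log_le_log (Real.exp_pos X) (le_trans (le_max_right _ _) ht)
    have hu0 : 0 ≤ Real.log (s / t) := Real.log_nonneg ((one_le_div htpos).2 hts)
    have huU : Real.log (s / t) ≤ Real.log Λ :=
      Real.log_le_log hdivpos ((div_le_iff₀ htpos).2 (by linarith))
    have key := hX (Real.log t) hx (Real.log (s / t)) ⟨hu0, huU⟩
    have he1 : Real.exp (Real.log t) = t := Real.exp_log htpos
    have he2 : Real.exp (Real.log t + Real.log (s / t)) = s := by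
      rw [Real.exp_add, Real.exp_log htpos, Real.exp_log hdivpos]
      field_simp
    have hk1 : k (Real.log t) = Real.log (g t) := by
      simp only [hkdef]; rw [he1, hGg t htT₀]
    have hk2 : k (Real.log t + Real.log (s / t)) = Real.log (g s) := by
      simp only [hkdef]; rw [he2, hGg s (le_trans htT₀ hts)]
    have hk3 : θ * Real.log (s / t) = Real.log ((s / t) ^ θ) :=
      (Real.log_rpow hdivpos θ).symm
    rw [hk1, hk2, hk3] at key
    have hrp : 0 < (s / t) ^ θ := Real.rpow_pos_of_pos hdivpos θ
    have hrpos : 0 < (s / t) ^ θ * g t := mul_pos hrp hgt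
    have key2 : |Real.log (g s / ((s / t) ^ θ * g t))| ≤ Real.log (1 + ε) := by
      rw [Real.log_div (ne_of_gt hgs) (ne_of_gt hrpos),
        Real.log_mul (ne_of_gt hrp) (ne_of_gt hgt)]
      have heq : Real.log (g s) - (Real.log ((s / t) ^ θ) + Real.log (g t)) =
          Real.log (g s) - Real.log (g t) - Real.log ((s / t) ^ θ) := by ring
      rw [heq]
      exact key
    set R : ℝ := g s / ((s / t) ^ θ * g t) with hR
    have hRpos : 0 < R := div_pos hgs hrpos
    have h1ε : (0:ℝ) < 1 + ε := by linarith
    have hub : R ≤ 1 + ε := by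
      calc R = Real.exp (Real.log R) := (Real.exp_log hRpos).symm
        _ ≤ Real.exp (Real.log (1 + ε)) := Real.exp_le_exp.2 (abs_le.1 key2).2
        _ = 1 + ε := Real.exp_log h1ε
    have hlb : 1 - ε ≤ R := by
      have h6 : (1 + ε)⁻¹ ≤ R := by
        calc (1 + ε)⁻¹ = Real.exp (-Real.log (1 + ε)) := by
              rw [Real.exp_neg, Real.exp_log h1ε]
          _ ≤ Real.exp (Real.log R) := Real.exp_le_exp.2 (by linarith [(abs_le.1 key2).1])
          _ = R := Real.exp_log hRpos
      have h7 : 1 - ε ≤ (1 + ε)⁻¹ := by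
        have hw : (1 + ε) * (1 + ε)⁻¹ = 1 := mul_inv_cancel₀ (ne_of_gt h1ε)
        nlinarith [inv_nonneg.2 h1ε.le, sq_nonneg ε]
      linarith
    have hgs_eq : g s = R * ((s / t) ^ θ * g t) := by
      rw [hR]; field_simp
    rw [hgs_eq]
    have habs : |R - 1| ≤ ε := abs_le.2 ⟨by linarith, by linarith⟩
    calc |R * ((s / t) ^ θ * g t) - (s / t) ^ θ * g t|
        = |R - 1| * ((s / t) ^ θ * g t) := by
          have hrw : R * ((s / t) ^ θ * g t) - (s / t) ^ θ * g t
              = (R - 1) * ((s / t) ^ θ * g t) := by ring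
          rw [hrw, abs_mul, abs_of_pos hrpos]
      _ ≤ ε * ((s / t) ^ θ * g t) :=
          mul_le_mul_of_nonneg_right habs (le_of_lt hrpos)
  -- multiplicative Potter bound
  have hpotm : ∀ η : ℝ, 0 < η → ∃ C : ℝ, 0 < C ∧ ∃ T : ℝ, T₀ ≤ T ∧ ∀ t, T ≤ t → ∀ s : ℝ,
      t ≤ s → g s ≤ C * ((s / t) ^ (θ + η) * g t) := by
    intro η hη
    obtain ⟨X, hX⟩ := potter_additive k θ huct η hη
    refine ⟨Real.exp η, Real.exp_pos η, max T₀ (Real.exp X), le_max_left _ _, ?_⟩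
    intro t ht s hts
    have htT₀ : T₀ ≤ t := le_trans (le_max_left _ _) ht
    have htpos : 0 < t := lt_of_lt_of_le hT₀pos htT₀
    have hspos : 0 < s := lt_of_lt_of_le htpos hts
    have hgt : 0 < g t := hgT₀ t htT₀
    have hgs : 0 < g s := hgT₀ s (le_trans htT₀ hts)
    have hdivpos : 0 < s / t := div_pos hspos htpos
    have hx : X ≤ Real.log t := by
      rw [← Real.log_exp X]
      exact Real.log_le_log (Real.exp_pos X) (le_trans (le_max_right _ _) ht)
    have hu0 : 0 ≤ Real.log (s / t) := Real.log_nonneg ((one_le_div htpos).2 hts)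
    have key := hX (Real.log t) hx (Real.log (s / t)) hu0
    have he1 : Real.exp (Real.log t) = t := Real.exp_log htpos
    have he2 : Real.exp (Real.log t + Real.log (s / t)) = s := by
      rw [Real.exp_add, Real.exp_log htpos, Real.exp_log hdivpos]
      field_simp
    have hk1 : k (Real.log t) = Real.log (g t) := by
      simp only [hkdef]; rw [he1, hGg t htT₀]
    have hk2 : k (Real.log t + Real.log (s / t)) = Real.log (g s) := by
      simp only [hkdef]; rw [he2, hGg s (le_trans htT₀ hts)]
    rw [hk1, hk2] at key
    have hrp : 0 < (s / t) ^ (θ + η) := Real.rpow_pos_of_pos hdivpos _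
    calc g s = Real.exp (Real.log (g s)) := (Real.exp_log hgs).symm
      _ ≤ Real.exp ((θ + η) * Real.log (s / t) + η + Real.log (g t)) := by
          apply Real.exp_le_exp.2; linarith
      _ = Real.exp η * ((s / t) ^ (θ + η) * g t) := by
          rw [Real.exp_add, Real.exp_add, Real.exp_log hgt, ← Real.log_rpow hdivpos,
            Real.exp_log hrp]
          ring
  -- integrability and the value of the tail integral
  have hIG : ∀ᶠ t in atTop, IntegrableOn g (Set.Ioi t) volume ∧
      t * deriv f t / f t = -(t * g t / (∫ s in Set.Ioi t, g s)) := by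
    rcases hsign with hp | hn
    · obtain ⟨T₂, hT₂⟩ := eventually_atTop.1 hp
      filter_upwards [eventually_ge_atTop T₂] with t ht
      have key : ∀ b, t ≤ b → (∫ s in t..b, g s) = f b - f t := by
        intro b hb
        have h1 : (∫ s in t..b, deriv f s) = f b - f t :=
          intervalIntegral.integral_deriv_eq_sub (fun x _ => hdiff x)
            (hdc.intervalIntegrable t b)
        rw [← h1]
        apply intervalIntegral.integral_congr
        intro x hx
        rw [Set.uIcc_of_le hb] at hx
        exact abs_of_pos (hT₂ x (le_trans ht hx.1))
      have htint : Tendsto (fun b => ∫ s in t..b, g s) atTop (nhds (0 - f t)) := by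
        apply Tendsto.congr' _ (hzero.sub_const (f t))
        filter_upwards [eventually_ge_atTop t] with b hb
        exact (key b hb).symm
      have hnorm : ∀ b : ℝ, (∫ s in t..b, ‖g s‖) = ∫ s in t..b, g s := by
        intro b
        apply intervalIntegral.integral_congr
        intro x _
        simp [hgdef, Real.norm_eq_abs, abs_abs]
      have hint : IntegrableOn g (Set.Ioi t) volume := by
        apply integrableOn_Ioi_of_intervalIntegral_norm_tendsto (0 - f t) t
          (fun b => hgc.integrableOn_Ioc) tendsto_id
        apply htint.congr
        intro b
        exact (hnorm b).symm
      have hval : (∫ s in Set.Ioi t, g s) = 0 - f t :=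
        tendsto_nhds_unique (intervalIntegral_tendsto_integral_Ioi t hint tendsto_id) htint
      refine ⟨hint, ?_⟩
      rw [hval]
      have hder : deriv f t = g t := (abs_of_pos (hT₂ t ht)).symm
      rw [hder]
      rw [zero_sub, div_neg, neg_neg]
    · obtain ⟨T₂, hT₂⟩ := eventually_atTop.1 hn
      filter_upwards [eventually_ge_atTop T₂] with t ht
      have key : ∀ b, t ≤ b → (∫ s in t..b, g s) = f t - f b := by
        intro b hb
        have h1 : (∫ s in t..b, deriv f s) = f b - f t :=
          intervalIntegral.integral_deriv_eq_sub (fun x _ => hdiff x)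
            (hdc.intervalIntegrable t b)
        have h2 : (∫ s in t..b, g s) = ∫ s in t..b, -deriv f s := by
          apply intervalIntegral.integral_congr
          intro x hx
          rw [Set.uIcc_of_le hb] at hx
          exact abs_of_neg (hT₂ x (le_trans ht hx.1))
        rw [h2, intervalIntegral.integral_neg, h1]
        ring
      have htint : Tendsto (fun b => ∫ s in t..b, g s) atTop (nhds (f t - 0)) := by
        apply Tendsto.congr' _ (tendsto_const_nhds.sub hzero)
        filter_upwards [eventually_ge_atTop t] with b hb
        exact (key b hb).symm
      have hnorm : ∀ b : ℝ, (∫ s in t..b, ‖g s‖) = ∫ s in t..b, g s := by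
        intro b
        apply intervalIntegral.integral_congr
        intro x _
        simp [hgdef, Real.norm_eq_abs, abs_abs]
      have hint : IntegrableOn g (Set.Ioi t) volume := by
        apply integrableOn_Ioi_of_intervalIntegral_norm_tendsto (f t - 0) t
          (fun b => hgc.integrableOn_Ioc) tendsto_id
        apply htint.congr
        intro b
        exact (hnorm b).symm
      have hval : (∫ s in Set.Ioi t, g s) = f t - 0 :=
        tendsto_nhds_unique (intervalIntegral_tendsto_integral_Ioi t hint tendsto_id) htint
      refine ⟨hint, ?_⟩
      rw [hval, sub_zero]
      have hder : deriv f t = -g t := by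
        rw [hgdef]
        simp only
        rw [abs_of_neg (hT₂ t ht), neg_neg]
      rw [hder]
      ring_nf
  obtain ⟨TIG, hTIG⟩ := eventually_atTop.1 hIG
  have hc0 : (0:ℝ) < -θ - 1 := by linarith
  set c : ℝ := 1 / (-θ - 1) with hcdef
  have hcpos : 0 < c := by rw [hcdef]; positivity
  have hmain : Tendsto (fun t => (∫ s in Set.Ioi t, g s) / (t * g t)) atTop (nhds c) := by
    rw [Metric.tendsto_atTop]
    intro ε hε
    set η : ℝ := (-θ - 1) / 2 with hηdef
    have hηpos : 0 < η := by rw [hηdef]; linarith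
    have hθη : θ + η + 1 < 0 := by rw [hηdef]; linarith
    have hθη' : θ + η < -1 := by linarith
    obtain ⟨C, hCpos, T₃, hT₃, hpott⟩ := hpotm η hηpos
    have t1 : Tendsto (fun Λ : ℝ => Λ ^ (θ + 1)) atTop (nhds 0) := by
      have h := tendsto_rpow_neg_atTop (y := -(θ + 1)) (by linarith)
      simpa using h
    have t2 : Tendsto (fun Λ : ℝ => Λ ^ (θ + η + 1)) atTop (nhds 0) := by
      have h := tendsto_rpow_neg_atTop (y := -(θ + η + 1)) (by linarith)
      simpa using h
    have htail : Tendsto (fun Λ : ℝ => Λ ^ (θ + 1) * c + C * Λ ^ (θ + η + 1) / (-θ - η - 1))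
        atTop (nhds 0) := by
      have h := (t1.mul_const c).add ((t2.const_mul C).div_const (-θ - η - 1))
      simpa using h
    obtain ⟨Λ, hΛ1, hΛtail⟩ :
        ∃ Λ : ℝ, 1 ≤ Λ ∧ Λ ^ (θ + 1) * c + C * Λ ^ (θ + η + 1) / (-θ - η - 1) ≤ ε / 4 := by
      obtain ⟨Λ, h2, h3⟩ := ((eventually_ge_atTop (1:ℝ)).and
        (htail.eventually (eventually_le_nhds (by linarith : (0:ℝ) < ε / 4)))).exists
      exact ⟨Λ, h2, h3⟩
    have hΛp1 : (0:ℝ) ≤ Λ ^ (θ + 1) := Real.rpow_nonneg (by linarith) _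
    have hΛp2 : (0:ℝ) ≤ C * Λ ^ (θ + η + 1) / (-θ - η - 1) :=
      div_nonneg (mul_nonneg hCpos.le (Real.rpow_nonneg (by linarith) _)) (by linarith)
    set ε₄ : ℝ := ε / 4 * (-θ - 1) with hε₄def
    have hε₄pos : 0 < ε₄ := by rw [hε₄def]; positivity
    have hε₄c : ε₄ * c = ε / 4 := by
      rw [hε₄def, hcdef]; field_simp
    obtain ⟨T₄, hT₄T₀, hmulΛ⟩ := hmul Λ hΛ1 ε₄ hε₄pos
    refine ⟨max (max T₃ T₄) TIG, ?_⟩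
    intro t ht
    have htT₃ : T₃ ≤ t := le_trans (le_trans (le_max_left _ _) (le_max_left _ _)) ht
    have htT₄ : T₄ ≤ t := le_trans (le_trans (le_max_right _ _) (le_max_left _ _)) ht
    have htTIG : TIG ≤ t := le_trans (le_max_right _ _) ht
    have htT₀ : T₀ ≤ t := le_trans hT₄T₀ htT₄
    have htpos : 0 < t := lt_of_lt_of_le hT₀pos htT₀
    have hgt : 0 < g t := hgT₀ t htT₀
    have htg : 0 < t * g t := mul_pos htpos hgt
    have hint : IntegrableOn g (Set.Ioi t) volume := (hTIG t htTIG).1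
    have hΛt : t ≤ Λ * t := le_mul_of_one_le_left htpos.le hΛ1
    have hΛtpos : 0 < Λ * t := lt_of_lt_of_le htpos hΛt
    have hint2 : IntegrableOn g (Set.Ioi (Λ * t)) volume :=
      hint.mono_set (Set.Ioi_subset_Ioi hΛt)
    have hint1 : IntegrableOn g (Set.Ioc t (Λ * t)) volume :=
      hint.mono_set Set.Ioc_subset_Ioi_self
    have hsplit : (∫ s in Set.Ioi t, g s)
        = (∫ s in Set.Ioc t (Λ * t), g s) + ∫ s in Set.Ioi (Λ * t), g s := by
      rw [← setIntegral_union (Set.Ioc_disjoint_Ioi le_rfl) measurableSet_Ioi hint1 hint2,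
        Set.Ioc_union_Ioi_eq_Ioi hΛt]
    set φ : ℝ → ℝ := fun s => (s / t) ^ θ * g t with hφdef
    have hφcont : ContinuousOn φ (Set.Icc t (Λ * t)) := by
      apply ContinuousOn.mul ?_ continuousOn_const
      apply ContinuousOn.rpow_const (continuousOn_id.div_const t)
      intro s hs
      exact Or.inl (ne_of_gt (div_pos (lt_of_lt_of_le htpos hs.1) htpos))
    have hφint : IntegrableOn φ (Set.Ioc t (Λ * t)) volume :=
      (hφcont.integrableOn_Icc).mono_set Set.Ioc_subset_Icc_self
    have hθ1ne : θ + 1 ≠ 0 := by linarith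
    have hm1ne : -θ - 1 ≠ 0 := by linarith
    have htθ : (0:ℝ) < t ^ θ := Real.rpow_pos_of_pos htpos θ
    have hφval : (∫ s in Set.Ioc t (Λ * t), φ s)
        = t * g t * (c - Λ ^ (θ + 1) * c) := by
      rw [← intervalIntegral.integral_of_le hΛt]
      have congr1 : (∫ s in t..(Λ * t), φ s) = ∫ s in t..(Λ * t), s ^ θ / t ^ θ * g t := by
        apply intervalIntegral.integral_congr
        intro s hs
        rw [Set.uIcc_of_le hΛt] at hs
        simp only [hφdef]
        rw [Real.div_rpow (le_trans htpos.le hs.1) htpos.le]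
      have h0mem : (0:ℝ) ∉ Set.uIcc t (Λ * t) := by
        rw [Set.uIcc_of_le hΛt]
        intro h
        exact absurd h.1 (not_le.2 htpos)
      rw [congr1, intervalIntegral.integral_mul_const, intervalIntegral.integral_div,
        integral_rpow (Or.inr ⟨ne_of_lt hθ, h0mem⟩)]
      have e1 : (Λ * t) ^ (θ + 1) = Λ ^ (θ + 1) * t ^ (θ + 1) :=
        Real.mul_rpow (by linarith) htpos.le
      have e2 : t ^ (θ + 1) = t ^ θ * t := by
        rw [Real.rpow_add htpos, Real.rpow_one]
      rw [e1, e2, hcdef]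
      field_simp
      ring
    have hmidlow : (1 - ε₄) * (t * g t * (c - Λ ^ (θ + 1) * c))
        ≤ ∫ s in Set.Ioc t (Λ * t), g s := by
      rw [← hφval]
      have h1 : ∀ s ∈ Set.Ioc t (Λ * t), (1 - ε₄) * φ s ≤ g s := by
        intro s hs
        have hb := (abs_le.1 (hmulΛ t htT₄ s hs.1.le hs.2)).1
        simp only [hφdef] at hb ⊢
        linarith
      calc (1 - ε₄) * ∫ s in Set.Ioc t (Λ * t), φ s
          = ∫ s in Set.Ioc t (Λ * t), (1 - ε₄) * φ s := (integral_const_mul _ _).symm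
        _ ≤ ∫ s in Set.Ioc t (Λ * t), g s :=
            setIntegral_mono_on (hφint.const_mul _) hint1 measurableSet_Ioc h1
    have hmidhigh : (∫ s in Set.Ioc t (Λ * t), g s)
        ≤ (1 + ε₄) * (t * g t * (c - Λ ^ (θ + 1) * c)) := by
      rw [← hφval]
      have h1 : ∀ s ∈ Set.Ioc t (Λ * t), g s ≤ (1 + ε₄) * φ s := by
        intro s hs
        have hb := (abs_le.1 (hmulΛ t htT₄ s hs.1.le hs.2)).2
        simp only [hφdef] at hb ⊢
        linarith
      calc (∫ s in Set.Ioc t (Λ * t), g s)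
          ≤ ∫ s in Set.Ioc t (Λ * t), (1 + ε₄) * φ s :=
            setIntegral_mono_on hint1 (hφint.const_mul _) measurableSet_Ioc h1
        _ = (1 + ε₄) * ∫ s in Set.Ioc t (Λ * t), φ s := integral_const_mul _ _
    have htail0 : 0 ≤ ∫ s in Set.Ioi (Λ * t), g s :=
      setIntegral_nonneg measurableSet_Ioi fun s _ => hgnn s
    have htθη : (0:ℝ) < t ^ (θ + η) := Real.rpow_pos_of_pos htpos _
    have hψint : IntegrableOn (fun s : ℝ => C * g t / t ^ (θ + η) * s ^ (θ + η))
        (Set.Ioi (Λ * t)) volume :=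
      (integrableOn_Ioi_rpow_of_lt hθη' hΛtpos).const_mul _
    have hψeq : Set.EqOn (fun s : ℝ => C * ((s / t) ^ (θ + η) * g t))
        (fun s : ℝ => C * g t / t ^ (θ + η) * s ^ (θ + η)) (Set.Ioi (Λ * t)) := by
      intro s hs
      have hs0 : (0:ℝ) ≤ s := le_trans (le_trans htpos.le hΛt) (le_of_lt hs)
      simp only
      rw [Real.div_rpow hs0 htpos.le]
      field_simp
    have hψint' : IntegrableOn (fun s : ℝ => C * ((s / t) ^ (θ + η) * g t))
        (Set.Ioi (Λ * t)) volume :=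
      hψint.congr_fun hψeq.symm measurableSet_Ioi
    have htne : θ + η + 1 ≠ 0 := by linarith
    have htailup : (∫ s in Set.Ioi (Λ * t), g s)
        ≤ t * g t * (C * Λ ^ (θ + η + 1) / (-θ - η - 1)) := by
      have h1 : (∫ s in Set.Ioi (Λ * t), g s)
          ≤ ∫ s in Set.Ioi (Λ * t), C * ((s / t) ^ (θ + η) * g t) := by
        apply setIntegral_mono_on hint2 hψint' measurableSet_Ioi
        intro s hs
        exact hpott t htT₃ s (le_trans hΛt (le_of_lt hs))
      have h2 : (∫ s in Set.Ioi (Λ * t), C * ((s / t) ^ (θ + η) * g t))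
          = C * g t / t ^ (θ + η) * ∫ s in Set.Ioi (Λ * t), s ^ (θ + η) := by
        rw [setIntegral_congr_fun measurableSet_Ioi hψeq, integral_const_mul]
      rw [h2, integral_Ioi_rpow_of_lt hθη' hΛtpos] at h1
      refine le_trans h1 (le_of_eq ?_)
      have e1 : (Λ * t) ^ (θ + η + 1) = Λ ^ (θ + η + 1) * t ^ (θ + η + 1) :=
        Real.mul_rpow (by linarith) htpos.le
      have e2 : t ^ (θ + η + 1) = t ^ (θ + η) * t := by
        rw [Real.rpow_add htpos, Real.rpow_one]
      rw [e1, e2, show -θ - η - 1 = -(θ + η + 1) by ring]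
      generalize hX2 : Λ ^ (θ + η + 1) = X2
      generalize hX1 : t ^ (θ + η) = X1 at htθη ⊢
      generalize hd : θ + η + 1 = d at htne ⊢
      have hX1ne : X1 ≠ 0 := ne_of_gt htθη
      field_simp [htne]
    -- assemble
    set A : ℝ := Λ ^ (θ + 1) * c with hAdef
    have hA0 : 0 ≤ A := mul_nonneg hΛp1 hcpos.le
    set TC : ℝ := C * Λ ^ (θ + η + 1) / (-θ - η - 1) with hTCdef
    have hTC0 : 0 ≤ TC := hΛp2
    have hscal : (1 + ε₄) * (c - A) + TC ≤ c + ε / 2 := by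
      nlinarith [hε₄pos.le, hA0, hTC0, hΛtail, hε₄c]
    have hscal2 : c - ε / 2 ≤ (1 - ε₄) * (c - A) := by
      nlinarith [hε₄pos.le, hA0, hTC0, hΛtail, hε₄c]
    have hFub : (∫ s in Set.Ioi t, g s) ≤ (c + ε / 2) * (t * g t) := by
      rw [hsplit]
      have h1 := mul_le_mul_of_nonneg_left hscal htg.le
      nlinarith [hmidhigh, htailup]
    have hFlb : (c - ε / 2) * (t * g t) ≤ ∫ s in Set.Ioi t, g s := by
      rw [hsplit]
      have h1 := mul_le_mul_of_nonneg_left hscal2 htg.le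
      nlinarith [hmidlow, htail0]
    rw [Real.dist_eq, abs_sub_lt_iff]
    constructor
    · have h := (div_le_iff₀ htg).2 hFub
      linarith
    · have h := (le_div_iff₀ htg).2 hFlb
      linarith
  have hinv : Tendsto (fun t => t * g t / (∫ s in Set.Ioi t, g s)) atTop (nhds (-θ - 1)) := by
    have h1 := hmain.inv₀ (ne_of_gt hcpos)
    have h2 : c⁻¹ = -θ - 1 := by rw [hcdef, one_div, inv_inv]
    rw [h2] at h1
    apply h1.congr
    intro t
    rw [inv_div]
  have hneg : Tendsto (fun t => -(t * g t / (∫ s in Set.Ioi t, g s))) atTop (nhds (θ + 1)) := by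
    have h := hinv.neg
    have h2 : -(-θ - 1) = θ + 1 := by ring
    rwa [h2] at h
  refine Tendsto.congr' ?_ hneg
  filter_upwards [hIG] with t ht
  exact ht.2.symm
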